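/- For even k with 0 ≤ k ≤ n, the operator 𝒜_k(X₁,…,Xₙ) = Σ_{2p+m=k} C(k/2, p)·(-2)^p·(X₁''⋯X_p''·X_{p+1}'⋯X_{p+m}'·X_{p+m+1}⋯Xₙ)_+ is sl₂-equivariant as a map from sl₂ⁿ to tensor densities of degree k - n: for all X ∈ sl₂, X·(𝒜_k(X₁,…,Xₙ))' + (k-n)X'·𝒜_k(X₁,…,Xₙ) = Σᵢ 𝒜_k(X₁,…,[X,Xᵢ],…,Xₙ). -/

import Mathlib

/-- A vector field coefficient belongs to `sl₂`, i.e. is spanned by `1, x, x²`. -/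
def IsSl2 (X : ℝ → ℂ) : Prop := ∃ a b c : ℂ, ∀ x : ℝ, X x = a + b * x + c * x ^ 2

/-- The bracket of vector fields, `[X,Y] = XY' - YX'`, on coefficient functions. -/
noncomputable def vfBracket (X Y : ℝ → ℂ) : ℝ → ℂ :=
  fun x => X x * deriv Y x - Y x * deriv X x

/-- The operator
`𝒜ₖ(X₁,…,Xₙ) = Σ_{2p+m=k} C(k/2,p)·(-2)^p·(X₁''⋯Xp''·X_{p+1}'⋯X_{p+m}'·X_{p+m+1}⋯Xₙ)₊`. -/
noncomputable def opAk (n k : ℕ) (Xs : Fin n → ℝ → ℂ) (x : ℝ) : ℂ :=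
  ∑ p ∈ Finset.range (k / 2 + 1), ((k / 2).choose p : ℂ) * (-2 : ℂ) ^ p *
    ∑ τ : Equiv.Perm (Fin n), ∏ i : Fin n,
      (if (i : ℕ) < p then deriv (deriv (Xs (τ i))) x
       else if (i : ℕ) < p + (k - 2 * p) then deriv (Xs (τ i)) x
       else Xs (τ i) x)

noncomputable def qf (a b c : ℂ) : ℕ → ℝ → ℂ
  | 0 => fun x => a + b * x + c * (x:ℂ) ^ 2
  | 1 => fun x => b + 2 * c * x
  | 2 => fun _ => 2 * c
  | _+3 => fun _ => 0

lemma qf_hasDerivAt (a b c : ℂ) (m : ℕ) (x : ℝ) :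
    HasDerivAt (qf a b c m) (qf a b c (m+1) x) x := by
  have hx : HasDerivAt (fun y : ℝ => (y : ℂ)) 1 x := by
    simpa using (hasDerivAt_id x).ofReal_comp
  match m with
  | 0 =>
    have h2 : HasDerivAt (fun y : ℝ => ((y:ℂ)) ^ 2) (2 * (x:ℂ)) x := by
      have := hx.fun_mul hx
      have he : (1 : ℂ) * x + (x : ℂ) * 1 = 2 * x := by ring
      rw [he] at this
      simpa [pow_two] using this
    have := ((hx.const_mul b).const_add a).add (h2.const_mul c)
    have he : b * 1 + c * (2 * (x:ℂ)) = b + 2 * c * x := by ring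
    rw [he] at this
    exact this
  | 1 =>
    have := (hx.const_mul (2*c)).const_add b
    have he : 2 * c * 1 = (2 : ℂ) * c := by ring
    rw [he] at this
    exact this
  | 2 => simpa [qf] using (hasDerivAt_const x (2*c))
  | (m+3) => simpa [qf] using (hasDerivAt_const x (0:ℂ))

lemma qf_deriv (a b c : ℂ) (m : ℕ) : deriv (qf a b c m) = qf a b c (m+1) :=
  funext fun x => (qf_hasDerivAt a b c m x).deriv

noncomputable def Sv (n : ℕ) (G : ℕ → Fin n → ℂ) (o : Fin n → ℕ) : ℂ :=
  ∑ τ : Equiv.Perm (Fin n), ∏ i : Fin n, G (o i) (τ i)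

def wpat (n p m : ℕ) (i : Fin n) : ℕ :=
  if (i : ℕ) < p then 2 else if (i : ℕ) < p + m then 1 else 0

lemma Sv_comp (n : ℕ) (G : ℕ → Fin n → ℂ) (o : Fin n → ℕ) (σ : Equiv.Perm (Fin n)) :
    Sv n G (o ∘ σ) = Sv n G o := by
  unfold Sv
  have h1 : ∀ τ : Equiv.Perm (Fin n),
      (∏ i : Fin n, G (o (σ i)) (τ i)) = ∏ i : Fin n, G (o i) ((τ * σ⁻¹) i) := by
    intro τ
    rw [← Equiv.prod_comp σ (fun j => G (o j) ((τ * σ⁻¹) j))]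
    simp [Equiv.Perm.mul_apply]
  simp only [Function.comp, h1]
  exact Equiv.sum_comp (Equiv.mulRight σ⁻¹) (fun τ => ∏ i : Fin n, G (o i) (τ i))

lemma update_wpat_two (n p m : ℕ) (j : Fin n) (hj : (j : ℕ) < p) (hpn : p ≤ n) :
    Function.update (wpat n p m) j 1 =
      wpat n (p - 1) (m + 1) ∘ (Equiv.swap j ⟨p - 1, by omega⟩) := by
  funext i
  simp only [Function.comp, Function.update_apply, Equiv.swap_apply_def, wpat, Fin.ext_iff]
  split_ifs <;> simp_all <;> omega

lemma update_wpat_one (n p m : ℕ) (j : Fin n) (hj1 : p ≤ (j : ℕ)) (hj2 : (j : ℕ) < p + m)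
    (hpmn : p + m ≤ n) :
    Function.update (wpat n p m) j 0 =
      wpat n p (m - 1) ∘ (Equiv.swap j ⟨p + m - 1, by omega⟩) := by
  funext i
  simp only [Function.comp, Function.update_apply, Equiv.swap_apply_def, wpat, Fin.ext_iff]
  split_ifs <;> simp_all <;> omega

lemma per_p (n k q p : ℕ) (hq : k = 2 * q) (hp : p ≤ q) (hkn : k ≤ n)
    (gv : ℕ → Fin n → ℂ) (xv : ℕ → ℂ) (kv : ℕ → Fin n → ℂ)
    (h0 : ∀ i, kv 0 i = xv 0 * gv 1 i - gv 0 i * xv 1)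
    (h1 : ∀ i, kv 1 i = xv 0 * gv 2 i - gv 0 i * xv 2)
    (h2 : ∀ i, kv 2 i = xv 1 * gv 2 i - xv 2 * gv 1 i)
    (h3 : ∀ i, gv 3 i = 0) :
    (∑ τ : Equiv.Perm (Fin n), ∑ j : Fin n,
        kv (wpat n p (k - 2*p) j) (τ j) *
          ∏ i ∈ Finset.univ.erase j, gv (wpat n p (k - 2*p) i) (τ i))
      - xv 0 * (∑ τ : Equiv.Perm (Fin n), ∑ j : Fin n,
        (∏ i ∈ Finset.univ.erase j, gv (wpat n p (k - 2*p) i) (τ i)) *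
          gv (wpat n p (k - 2*p) j + 1) (τ j))
      - ((k : ℂ) - (n : ℂ)) * xv 1 * Sv n gv (wpat n p (k - 2*p))
    = - xv 2 * ((p : ℂ) * Sv n gv (wpat n (p - 1) (k - 2*(p-1) - 1))
        + ((k - 2*p : ℕ) : ℂ) * Sv n gv (wpat n p (k - 2*p - 1))) := by
  set m : ℕ := k - 2*p with hm
  have hpmn : p + m ≤ n := by omega
  set S : ℂ := Sv n gv (wpat n p m) with hS
  set V2 : ℂ := Sv n gv (wpat n (p - 1) (k - 2*(p-1) - 1)) with hV2
  set V1 : ℂ := Sv n gv (wpat n p (k - 2*p - 1)) with hV1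
  -- reassembly of products
  have hre : ∀ (τ : Equiv.Perm (Fin n)) (j : Fin n) (d : ℕ),
      gv d (τ j) * ∏ i ∈ Finset.univ.erase j, gv (wpat n p m i) (τ i)
      = ∏ i : Fin n, gv (Function.update (wpat n p m) j d i) (τ i) := by
    intro τ j d
    rw [← Finset.mul_prod_erase Finset.univ
      (fun i => gv (Function.update (wpat n p m) j d i) (τ i)) (Finset.mem_univ j)]
    rw [Function.update_self]
    congr 1
    refine Finset.prod_congr rfl (fun i hi => ?_)
    rw [Function.update_of_ne (Finset.ne_of_mem_erase hi)]
  have hfull : ∀ (τ : Equiv.Perm (Fin n)) (j : Fin n),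
      gv (wpat n p m j) (τ j) * ∏ i ∈ Finset.univ.erase j, gv (wpat n p m i) (τ i)
      = ∏ i : Fin n, gv (wpat n p m i) (τ i) :=
    fun τ j => Finset.mul_prod_erase Finset.univ
      (fun i => gv (wpat n p m i) (τ i)) (Finset.mem_univ j)
  -- per-j inner sums
  have key : ∀ j : Fin n,
      (∑ τ : Equiv.Perm (Fin n),
        (kv (wpat n p m j) (τ j) * ∏ i ∈ Finset.univ.erase j, gv (wpat n p m i) (τ i)
         - xv 0 * ((∏ i ∈ Finset.univ.erase j, gv (wpat n p m i) (τ i)) *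
             gv (wpat n p m j + 1) (τ j))))
      = if (j : ℕ) < p then xv 1 * S - xv 2 * V2
        else if (j : ℕ) < p + m then - (xv 2 * V1)
        else - (xv 1 * S) := by
    intro j
    by_cases hj2 : (j : ℕ) < p
    · have hw : wpat n p m j = 2 := by simp [wpat, hj2]
      have hupd : Sv n gv (Function.update (wpat n p m) j 1) = V2 := by
        rw [update_wpat_two n p m j hj2 (by omega), Sv_comp]
        rw [hV2, show m + 1 = k - 2*(p-1) - 1 by omega]
      rw [if_pos hj2, ← hupd]
      rw [show (∑ τ : Equiv.Perm (Fin n),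
        (kv (wpat n p m j) (τ j) * ∏ i ∈ Finset.univ.erase j, gv (wpat n p m i) (τ i)
         - xv 0 * ((∏ i ∈ Finset.univ.erase j, gv (wpat n p m i) (τ i)) *
             gv (wpat n p m j + 1) (τ j))))
        = ∑ τ : Equiv.Perm (Fin n),
          (xv 1 * (∏ i : Fin n, gv (wpat n p m i) (τ i))
           - xv 2 * (∏ i : Fin n, gv (Function.update (wpat n p m) j 1 i) (τ i)))
        from Finset.sum_congr rfl (fun τ _ => by
          rw [← hfull τ j, ← hre τ j 1, hw, h2, h3]; ring)]
      rw [Finset.sum_sub_distrib, ← Finset.mul_sum, ← Finset.mul_sum]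
      simp only [hS, ← hupd, Sv]
    · by_cases hj1 : (j : ℕ) < p + m
      · have hw : wpat n p m j = 1 := by simp [wpat, hj2, hj1]
        have hupd : Sv n gv (Function.update (wpat n p m) j 0) = V1 := by
          rw [update_wpat_one n p m j (by omega) hj1 hpmn, Sv_comp]
        rw [if_neg hj2, if_pos hj1, ← hupd]
        rw [show (∑ τ : Equiv.Perm (Fin n),
          (kv (wpat n p m j) (τ j) * ∏ i ∈ Finset.univ.erase j, gv (wpat n p m i) (τ i)
           - xv 0 * ((∏ i ∈ Finset.univ.erase j, gv (wpat n p m i) (τ i)) *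
               gv (wpat n p m j + 1) (τ j))))
          = ∑ τ : Equiv.Perm (Fin n),
            (- (xv 2 * (∏ i : Fin n, gv (Function.update (wpat n p m) j 0 i) (τ i))))
          from Finset.sum_congr rfl (fun τ _ => by
            rw [← hre τ j 0, hw, h1]; ring)]
        rw [Finset.sum_neg_distrib, ← Finset.mul_sum]
        simp only [← hupd, Sv]
      · have hw : wpat n p m j = 0 := by simp [wpat, hj2, hj1]
        rw [if_neg hj2, if_neg hj1]
        rw [show (∑ τ : Equiv.Perm (Fin n),
          (kv (wpat n p m j) (τ j) * ∏ i ∈ Finset.univ.erase j, gv (wpat n p m i) (τ i)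
           - xv 0 * ((∏ i ∈ Finset.univ.erase j, gv (wpat n p m i) (τ i)) *
               gv (wpat n p m j + 1) (τ j))))
          = ∑ τ : Equiv.Perm (Fin n),
            (- (xv 1 * (∏ i : Fin n, gv (wpat n p m i) (τ i))))
          from Finset.sum_congr rfl (fun τ _ => by
            rw [← hfull τ j, hw, h0]; ring)]
        rw [Finset.sum_neg_distrib, ← Finset.mul_sum]
        simp only [hS, Sv]
  -- combine over j
  have hcomb :
      (∑ τ : Equiv.Perm (Fin n), ∑ j : Fin n,
          kv (wpat n p m j) (τ j) * ∏ i ∈ Finset.univ.erase j, gv (wpat n p m i) (τ i))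
        - xv 0 * (∑ τ : Equiv.Perm (Fin n), ∑ j : Fin n,
          (∏ i ∈ Finset.univ.erase j, gv (wpat n p m i) (τ i)) *
            gv (wpat n p m j + 1) (τ j))
      = ∑ j : Fin n,
          if (j : ℕ) < p then xv 1 * S - xv 2 * V2
          else if (j : ℕ) < p + m then - (xv 2 * V1)
          else - (xv 1 * S) := by
    rw [Finset.mul_sum, ← Finset.sum_sub_distrib]
    have hτ : ∀ τ : Equiv.Perm (Fin n),
        ((∑ j : Fin n, kv (wpat n p m j) (τ j) *
            ∏ i ∈ Finset.univ.erase j, gv (wpat n p m i) (τ i))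
          - xv 0 * ∑ j : Fin n, (∏ i ∈ Finset.univ.erase j, gv (wpat n p m i) (τ i)) *
              gv (wpat n p m j + 1) (τ j))
        = ∑ j : Fin n,
            (kv (wpat n p m j) (τ j) * ∏ i ∈ Finset.univ.erase j, gv (wpat n p m i) (τ i)
             - xv 0 * ((∏ i ∈ Finset.univ.erase j, gv (wpat n p m i) (τ i)) *
                 gv (wpat n p m j + 1) (τ j))) := by
      intro τ
      rw [Finset.mul_sum, ← Finset.sum_sub_distrib]
    simp only [hτ]
    rw [Finset.sum_comm]
    exact Finset.sum_congr rfl (fun j _ => key j)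
  rw [hcomb]
  have hsum : (∑ j : Fin n, if (j:ℕ) < p then xv 1 * S - xv 2 * V2
        else if (j:ℕ) < p + m then -(xv 2 * V1) else -(xv 1 * S))
      = (p:ℂ) * (xv 1 * S - xv 2 * V2) + (m:ℂ) * (-(xv 2 * V1))
        + ((n:ℂ) - p - m) * (-(xv 1 * S)) := by
    rw [Fin.sum_univ_eq_sum_range (fun t => if t < p then xv 1 * S - xv 2 * V2
      else if t < p + m then -(xv 2 * V1) else -(xv 1 * S)) n]
    rw [Finset.range_eq_Ico, ← Finset.sum_Ico_consecutive _ (Nat.zero_le (p+m)) hpmn,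
        ← Finset.sum_Ico_consecutive _ (Nat.zero_le p) (Nat.le_add_right p m)]
    have e1 : ∑ t ∈ Finset.Ico 0 p, (if t < p then xv 1 * S - xv 2 * V2
        else if t < p + m then -(xv 2 * V1) else -(xv 1 * S)) = p • (xv 1 * S - xv 2 * V2) := by
      rw [Finset.sum_congr rfl (fun t ht => if_pos (Finset.mem_Ico.mp ht).2),
        Finset.sum_const, Nat.card_Ico, Nat.sub_zero]
    have e2 : ∑ t ∈ Finset.Ico p (p+m), (if t < p then xv 1 * S - xv 2 * V2
        else if t < p + m then -(xv 2 * V1) else -(xv 1 * S)) = m • (-(xv 2 * V1)) := by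
      have : ∀ t ∈ Finset.Ico p (p+m), (if t < p then xv 1 * S - xv 2 * V2
          else if t < p + m then -(xv 2 * V1) else -(xv 1 * S)) = -(xv 2 * V1) := by
        intro t ht
        obtain ⟨h1, h2⟩ := Finset.mem_Ico.mp ht
        rw [if_neg (by omega), if_pos h2]
      rw [Finset.sum_congr rfl this, Finset.sum_const, Nat.card_Ico, Nat.add_sub_cancel_left]
    have e3 : ∑ t ∈ Finset.Ico (p+m) n, (if t < p then xv 1 * S - xv 2 * V2
        else if t < p + m then -(xv 2 * V1) else -(xv 1 * S)) = (n - (p+m)) • (-(xv 1 * S)) := by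
      have : ∀ t ∈ Finset.Ico (p+m) n, (if t < p then xv 1 * S - xv 2 * V2
          else if t < p + m then -(xv 2 * V1) else -(xv 1 * S)) = -(xv 1 * S) := by
        intro t ht
        obtain ⟨h1, h2⟩ := Finset.mem_Ico.mp ht
        rw [if_neg (by omega), if_neg (by omega)]
      rw [Finset.sum_congr rfl this, Finset.sum_const, Nat.card_Ico]
    rw [e1, e2, e3, nsmul_eq_mul, nsmul_eq_mul, nsmul_eq_mul]
    rw [Nat.cast_sub hpmn]
    push_cast
    ring
  rw [hsum]
  have hkc : (k : ℂ) = 2*(p:ℂ) + (m:ℂ) := by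
    have : k = 2*p + m := by omega
    rw [this]; push_cast; ring
  have hV1' : ((k - 2*p : ℕ) : ℂ) = (m : ℂ) := rfl
  rw [hV1', hkc]
  ring

lemma keylemma (n k q : ℕ) (hq : k = 2 * q) (hkn : k ≤ n)
    (gv : ℕ → Fin n → ℂ) (xv : ℕ → ℂ) (kv : ℕ → Fin n → ℂ)
    (h0 : ∀ i, kv 0 i = xv 0 * gv 1 i - gv 0 i * xv 1)
    (h1 : ∀ i, kv 1 i = xv 0 * gv 2 i - gv 0 i * xv 2)
    (h2 : ∀ i, kv 2 i = xv 1 * gv 2 i - xv 2 * gv 1 i)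
    (h3 : ∀ i, gv 3 i = 0) :
    xv 0 * (∑ p ∈ Finset.range (q + 1), ((q.choose p : ℂ) * (-2) ^ p) *
        ∑ τ : Equiv.Perm (Fin n), ∑ j : Fin n,
          (∏ i ∈ Finset.univ.erase j, gv (wpat n p (k - 2*p) i) (τ i)) *
            gv (wpat n p (k - 2*p) j + 1) (τ j))
      + ((k : ℂ) - (n : ℂ)) * xv 1 *
        (∑ p ∈ Finset.range (q + 1), ((q.choose p : ℂ) * (-2) ^ p) *
          Sv n gv (wpat n p (k - 2*p)))
      = ∑ p ∈ Finset.range (q + 1), ((q.choose p : ℂ) * (-2) ^ p) *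
        ∑ τ : Equiv.Perm (Fin n), ∑ j : Fin n,
          kv (wpat n p (k - 2*p) j) (τ j) *
            ∏ i ∈ Finset.univ.erase j, gv (wpat n p (k - 2*p) i) (τ i) := by
  have expand :
      (∑ p ∈ Finset.range (q + 1), ((q.choose p : ℂ) * (-2) ^ p) *
        ∑ τ : Equiv.Perm (Fin n), ∑ j : Fin n,
          kv (wpat n p (k - 2*p) j) (τ j) *
            ∏ i ∈ Finset.univ.erase j, gv (wpat n p (k - 2*p) i) (τ i))
      - (xv 0 * (∑ p ∈ Finset.range (q + 1), ((q.choose p : ℂ) * (-2) ^ p) *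
        ∑ τ : Equiv.Perm (Fin n), ∑ j : Fin n,
          (∏ i ∈ Finset.univ.erase j, gv (wpat n p (k - 2*p) i) (τ i)) *
            gv (wpat n p (k - 2*p) j + 1) (τ j))
      + ((k : ℂ) - (n : ℂ)) * xv 1 *
        (∑ p ∈ Finset.range (q + 1), ((q.choose p : ℂ) * (-2) ^ p) *
          Sv n gv (wpat n p (k - 2*p))))
      = ∑ p ∈ Finset.range (q + 1), ((q.choose p : ℂ) * (-2) ^ p) *
          (- xv 2 * ((p : ℂ) * Sv n gv (wpat n (p - 1) (k - 2*(p-1) - 1))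
            + ((k - 2*p : ℕ) : ℂ) * Sv n gv (wpat n p (k - 2*p - 1)))) := by
    rw [Finset.mul_sum, Finset.mul_sum, ← Finset.sum_add_distrib, ← Finset.sum_sub_distrib]
    refine Finset.sum_congr rfl (fun p hp => ?_)
    have hpq : p ≤ q := by
      have := Finset.mem_range.mp hp; omega
    rw [← per_p n k q p hq hpq hkn gv xv kv h0 h1 h2 h3]
    ring
  set Vf : ℕ → ℂ := fun p' => Sv n gv (wpat n p' (k - 2*p' - 1)) with hVf
  have hco : ∀ p, p < q → (q.choose (p+1) : ℂ) * (-2)^(p+1) * (((p:ℕ)+1 : ℕ) : ℂ)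
      + (q.choose p : ℂ) * (-2)^p * ((k - 2*p : ℕ) : ℂ) = 0 := by
    intro p hp
    have h1 := congrArg (Nat.cast (R := ℂ)) (Nat.choose_succ_right_eq q p)
    rw [Nat.cast_mul, Nat.cast_mul, Nat.cast_sub (le_of_lt hp)] at h1
    have h2c : ((k - 2*p : ℕ) : ℂ) = 2*((q:ℂ) - p) := by
      rw [show k - 2*p = 2*(q-p) from by omega, Nat.cast_mul, Nat.cast_sub (le_of_lt hp)]
      push_cast; ring
    push_cast at h1 ⊢
    rw [h2c]
    linear_combination (-2:ℂ)^(p+1) * h1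
  have htel : (∑ p ∈ Finset.range (q + 1), ((q.choose p : ℂ) * (-2) ^ p) *
      (- xv 2 * ((p : ℂ) * Vf (p - 1) + ((k - 2*p : ℕ) : ℂ) * Vf p))) = 0 := by
    have split : ∀ p, ((q.choose p : ℂ) * (-2) ^ p) *
        (- xv 2 * ((p : ℂ) * Vf (p - 1) + ((k - 2*p : ℕ) : ℂ) * Vf p))
        = (- xv 2) * ((q.choose p : ℂ) * (-2) ^ p * (p : ℂ) * Vf (p - 1))
          + (- xv 2) * ((q.choose p : ℂ) * (-2) ^ p * ((k - 2*p : ℕ) : ℂ) * Vf p) := by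
      intro p; ring
    simp only [split]
    rw [Finset.sum_add_distrib]
    rw [Finset.sum_range_succ', Finset.sum_range_succ]
    have hg0 : (- xv 2) * ((q.choose 0 : ℂ) * (-2) ^ 0 * ((0:ℕ) : ℂ) * Vf (0 - 1)) = 0 := by
      simp
    have hhq : (- xv 2) * ((q.choose q : ℂ) * (-2) ^ q * ((k - 2*q : ℕ) : ℂ) * Vf q) = 0 := by
      rw [show k - 2*q = 0 from by omega]
      simp
    rw [hg0, hhq, add_zero, add_zero, ← Finset.sum_add_distrib]
    refine Finset.sum_eq_zero (fun p hp => ?_)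
    have hpq : p < q := Finset.mem_range.mp hp
    have := hco p hpq
    have hpp : (p + 1) - 1 = p := by omega
    rw [hpp]
    push_cast at this ⊢
    linear_combination (- xv 2) * (Vf p) * this
  have hz := expand.trans htel
  linear_combination - hz


theorem opAk_equivariant (n k : ℕ) (hk : Even k) (hkn : k ≤ n)
    (Xs : Fin n → ℝ → ℂ) (hXs : ∀ i, IsSl2 (Xs i)) (X : ℝ → ℂ) (hX : IsSl2 X) :
    ∀ x : ℝ,
      X x * deriv (fun y => opAk n k Xs y) x + ((k : ℂ) - (n : ℂ)) * deriv X x * opAk n k Xs x =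
      ∑ i : Fin n, opAk n k (Function.update Xs i (vfBracket X (Xs i))) x := by
  intro x
  obtain ⟨u, v, w, hXc⟩ := hX
  choose A B C hABC using hXs
  obtain ⟨q, hqq⟩ := hk
  have hq : k = 2 * q := by omega
  have hq2 : k / 2 = q := by omega
  have hXf : X = qf u v w 0 := funext fun y => by simpa [qf] using hXc y
  have hXsf : ∀ i, Xs i = qf (A i) (B i) (C i) 0 :=
    fun i => funext fun y => by simpa [qf] using hABC i y
  set a' : Fin n → ℂ := fun i => u * B i - v * A i with ha'
  set b' : Fin n → ℂ := fun i => 2 * (u * C i - w * A i) with hb'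
  set c' : Fin n → ℂ := fun i => v * C i - w * B i with hc'
  set gv : ℕ → Fin n → ℂ := fun m i => qf (A i) (B i) (C i) m x with hgv
  set xv : ℕ → ℂ := fun m => qf u v w m x with hxv
  set kv : ℕ → Fin n → ℂ := fun m i => qf (a' i) (b' i) (c' i) m x with hkv
  -- Step 1: opAk in terms of qf
  have hop : ∀ y : ℝ, opAk n k Xs y = ∑ p ∈ Finset.range (q + 1),
      ((q.choose p : ℂ) * (-2) ^ p) * ∑ τ : Equiv.Perm (Fin n), ∏ i : Fin n,
        qf (A (τ i)) (B (τ i)) (C (τ i)) (wpat n p (k - 2*p) i) y := by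
    intro y
    unfold opAk
    rw [hq2]
    refine Finset.sum_congr rfl (fun p hp => ?_)
    congr 1
    refine Finset.sum_congr rfl fun τ _ => Finset.prod_congr rfl fun i _ => ?_
    simp only [hXsf, qf_deriv]
    unfold wpat
    split_ifs <;> rfl
  -- Step 2: derivative of opAk at x
  have hprod : ∀ (p : ℕ) (τ : Equiv.Perm (Fin n)),
      HasDerivAt (fun y => ∏ i : Fin n,
          qf (A (τ i)) (B (τ i)) (C (τ i)) (wpat n p (k - 2*p) i) y)
        (∑ j : Fin n, (∏ i ∈ Finset.univ.erase j, gv (wpat n p (k - 2*p) i) (τ i)) *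
            gv (wpat n p (k - 2*p) j + 1) (τ j)) x := by
    intro p τ
    have h := HasDerivAt.fun_finsetProd (u := (Finset.univ : Finset (Fin n)))
      (f := fun i y => qf (A (τ i)) (B (τ i)) (C (τ i)) (wpat n p (k - 2*p) i) y)
      (f' := fun i => qf (A (τ i)) (B (τ i)) (C (τ i)) (wpat n p (k - 2*p) i + 1) x)
      (fun i _ => qf_hasDerivAt _ _ _ _ x)
    simpa [smul_eq_mul, hgv] using h
  have hDer : HasDerivAt (fun y => opAk n k Xs y)
      (∑ p ∈ Finset.range (q + 1), ((q.choose p : ℂ) * (-2) ^ p) *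
        ∑ τ : Equiv.Perm (Fin n), ∑ j : Fin n,
          (∏ i ∈ Finset.univ.erase j, gv (wpat n p (k - 2*p) i) (τ i)) *
            gv (wpat n p (k - 2*p) j + 1) (τ j)) x := by
    have hfe : (fun y => opAk n k Xs y) = fun y => ∑ p ∈ Finset.range (q + 1),
        ((q.choose p : ℂ) * (-2) ^ p) * ∑ τ : Equiv.Perm (Fin n), ∏ i : Fin n,
          qf (A (τ i)) (B (τ i)) (C (τ i)) (wpat n p (k - 2*p) i) y := funext hop
    rw [hfe]
    exact HasDerivAt.fun_sum fun p _ =>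
      (HasDerivAt.fun_sum fun τ _ => hprod p τ).const_mul _
  -- Step 3: bracket is quadratic
  have hbr : ∀ i, vfBracket X (Xs i) = qf (a' i) (b' i) (c' i) 0 := by
    intro i
    funext y
    show X y * deriv (Xs i) y - Xs i y * deriv X y = _
    rw [hXf, hXsf i, qf_deriv, qf_deriv]
    simp only [qf, ha', hb', hc']
    ring
  -- Step 4: RHS summands in terms of qf
  have hRHSi : ∀ i : Fin n, opAk n k (Function.update Xs i (vfBracket X (Xs i))) x
      = ∑ p ∈ Finset.range (q + 1), ((q.choose p : ℂ) * (-2) ^ p) *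
        ∑ τ : Equiv.Perm (Fin n), ∏ j : Fin n,
          (if τ j = i then kv (wpat n p (k - 2*p) j) i
           else gv (wpat n p (k - 2*p) j) (τ j)) := by
    intro i
    unfold opAk
    rw [hq2]
    refine Finset.sum_congr rfl (fun p hp => ?_)
    congr 1
    refine Finset.sum_congr rfl fun τ _ => Finset.prod_congr rfl fun j _ => ?_
    have hupd : Function.update Xs i (vfBracket X (Xs i)) (τ j)
        = if τ j = i then qf (a' i) (b' i) (c' i) 0
          else qf (A (τ j)) (B (τ j)) (C (τ j)) 0 := by
      rw [Function.update_apply]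
      split_ifs with h
      · exact hbr i
      · exact hXsf (τ j)
    rw [hupd]
    by_cases h : τ j = i
    · simp only [if_pos h, qf_deriv]
      unfold wpat
      split_ifs <;> rfl
    · simp only [if_neg h, qf_deriv]
      unfold wpat
      split_ifs <;> rfl
  -- Step 5: resum the RHS
  have hRHS : (∑ i : Fin n, opAk n k (Function.update Xs i (vfBracket X (Xs i))) x)
      = ∑ p ∈ Finset.range (q + 1), ((q.choose p : ℂ) * (-2) ^ p) *
        ∑ τ : Equiv.Perm (Fin n), ∑ j : Fin n,
          kv (wpat n p (k - 2*p) j) (τ j) *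
            ∏ i ∈ Finset.univ.erase j, gv (wpat n p (k - 2*p) i) (τ i) := by
    simp only [hRHSi]
    rw [Finset.sum_comm]
    refine Finset.sum_congr rfl fun p _ => ?_
    rw [← Finset.mul_sum]
    congr 1
    rw [Finset.sum_comm]
    refine Finset.sum_congr rfl fun τ _ => ?_
    have hsplit : ∀ i : Fin n,
        (∏ j : Fin n, (if τ j = i then kv (wpat n p (k - 2*p) j) i
            else gv (wpat n p (k - 2*p) j) (τ j)))
        = kv (wpat n p (k - 2*p) (τ.symm i)) (τ (τ.symm i)) *
            ∏ j ∈ Finset.univ.erase (τ.symm i), gv (wpat n p (k - 2*p) j) (τ j) := by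
      intro i
      rw [← Finset.mul_prod_erase Finset.univ
        (fun j => if τ j = i then kv (wpat n p (k - 2*p) j) i
            else gv (wpat n p (k - 2*p) j) (τ j)) (Finset.mem_univ (τ.symm i))]
      congr 1
      · rw [if_pos (τ.apply_symm_apply i), τ.apply_symm_apply]
      · refine Finset.prod_congr rfl fun j hj => ?_
        have hne : τ j ≠ i := by
          intro hc
          exact (Finset.ne_of_mem_erase hj) (by rw [← hc, Equiv.symm_apply_apply])
        rw [if_neg hne]
    simp only [hsplit]
    rw [← Equiv.sum_comp τ (fun i => kv (wpat n p (k - 2*p) (τ.symm i)) (τ (τ.symm i)) *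
        ∏ j ∈ Finset.univ.erase (τ.symm i), gv (wpat n p (k - 2*p) j) (τ j))]
    simp only [Equiv.symm_apply_apply]
  -- Step 6: value-level identities and conclusion
  have h0 : ∀ i, kv 0 i = xv 0 * gv 1 i - gv 0 i * xv 1 := by
    intro i; simp only [hkv, hgv, hxv, qf, ha', hb', hc']; ring
  have h1 : ∀ i, kv 1 i = xv 0 * gv 2 i - gv 0 i * xv 2 := by
    intro i; simp only [hkv, hgv, hxv, qf, ha', hb', hc']; ring
  have h2 : ∀ i, kv 2 i = xv 1 * gv 2 i - xv 2 * gv 1 i := by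
    intro i; simp only [hkv, hgv, hxv, qf, ha', hb', hc']; ring
  have h3 : ∀ i, gv 3 i = 0 := by intro i; simp [hgv, qf]
  have hXx : X x = xv 0 := by rw [hXf]
  have hX'x : deriv X x = xv 1 := by rw [hXf, qf_deriv]
  rw [hXx, hX'x, hDer.deriv, hop x, hRHS]
  have hSv : ∀ p, (∑ τ : Equiv.Perm (Fin n), ∏ i : Fin n,
      qf (A (τ i)) (B (τ i)) (C (τ i)) (wpat n p (k - 2*p) i) x)
      = Sv n gv (wpat n p (k - 2*p)) := fun p => rfl
  simp only [hSv]
  exact keylemma n k q hq hkn gv xv kv h0 h1 h2 h3
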